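/- Scaling up the attack strategy increases compromise probabilities: if λ ≥ 1 and C^{(1)}, C^{(λ)} are the solutions of the SCS model with attack strategies x and λx respectively (same parameters, same initial condition in [0,1]^N), then C_i^{(1)}(t) ≤ C_i^{(λ)}(t) for all i and t ∈ [0,T]. -/

import Mathlib

open Set Filter Topology

/-- The right-hand side of the SCS model. -/
noncomputable def scsF {N : ℕ} (a : Fin N → Fin N → ℝ) (w x : Fin N → ℝ) (α β δ γ : ℝ)
    (C : Fin N → ℝ) : Fin N → ℝ :=
  fun i => (1 / (δ * w i)) * (α * x i + β * ∑ j, a j i * C j) * (1 - C i) - γ * w i * C i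

lemma scs_eventually_lt_right {f : ℝ → ℝ} {d t0 : ℝ} (h : HasDerivAt f d t0) (hd : d < 0) :
    ∀ᶠ t in 𝓝[>] t0, f t < f t0 := by
  rw [hasDerivAt_iff_tendsto_slope] at h
  have h' : Tendsto (slope f t0) (𝓝[>] t0) (𝓝 d) :=
    h.mono_left (nhdsWithin_mono _ fun z hz => ne_of_gt hz)
  filter_upwards [h'.eventually (gt_mem_nhds hd), self_mem_nhdsWithin] with t hs ht
  rw [slope_def_field] at hs
  have htt : (0:ℝ) < t - t0 := sub_pos.2 ht
  have h2 : f t - f t0 < 0 := by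
    have := mul_lt_mul_of_pos_right hs htt
    rwa [div_mul_cancel₀ _ (ne_of_gt htt), zero_mul] at this
  linarith

lemma scs_deriv_nonneg_of_left {g : ℝ → ℝ} {d t0 : ℝ} (h : HasDerivAt g d t0)
    (hlt : ∀ᶠ t in 𝓝[<] t0, g t < g t0) : 0 ≤ d := by
  rw [hasDerivAt_iff_tendsto_slope] at h
  have h' : Tendsto (slope g t0) (𝓝[<] t0) (𝓝 d) :=
    h.mono_left (nhdsWithin_mono _ fun z hz => ne_of_lt hz)
  refine ge_of_tendsto h' ?_
  filter_upwards [hlt, self_mem_nhdsWithin] with t hg ht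
  rw [slope_def_field]
  exact le_of_lt (div_pos_of_neg_of_neg (by linarith) (sub_neg.2 ht))

lemma scs_le_one {N : ℕ} (a : Fin N → Fin N → ℝ) (w x : Fin N → ℝ) (α β δ γ T : ℝ)
    (hγ : 0 < γ) (hw : ∀ i, 0 < w i) (C : ℝ → Fin N → ℝ)
    (hC : ∀ t ∈ Set.Icc (0:ℝ) T, HasDerivAt C (scsF a w x α β δ γ (C t)) t)
    (h0 : ∀ i, C 0 i ≤ 1) :
    ∀ t ∈ Set.Icc (0:ℝ) T, ∀ i, C t i ≤ 1 := by
  intro t ht i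
  by_contra hgt
  push_neg at hgt
  have hfd : ∀ s ∈ Set.Icc (0:ℝ) T,
      HasDerivAt (fun u => C u i) (scsF a w x α β δ γ (C s) i) s :=
    fun s hs => (hasDerivAt_pi.1 (hC s hs)) i
  have hfc : ContinuousOn (fun u => C u i) (Set.Icc 0 T) :=
    fun s hs => ((hfd s hs).continuousAt).continuousWithinAt
  set A := {s ∈ Set.Icc (0:ℝ) t | C s i ≤ 1} with hA
  have hsub : Set.Icc (0:ℝ) t ⊆ Set.Icc 0 T := Set.Icc_subset_Icc le_rfl ht.2
  have hAclosed : IsClosed A :=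
    ContinuousOn.preimage_isClosed_of_isClosed (hfc.mono hsub) isClosed_Icc
      (isClosed_Iic (a := (1:ℝ)))
  have h0A : (0:ℝ) ∈ A := ⟨⟨le_rfl, ht.1⟩, h0 i⟩
  have hbdd : BddAbove A := BddAbove.mono (fun s hs => hs.1) bddAbove_Icc
  set t2 := sSup A with ht2def
  have ht2 : t2 ∈ A := hAclosed.csSup_mem ⟨0, h0A⟩ hbdd
  have ht2T : t2 ∈ Set.Icc (0:ℝ) T := hsub ht2.1
  have ht2t : t2 < t := lt_of_le_of_ne ht2.1.2 (by
    intro h; rw [h] at ht2; exact absurd ht2.2 (not_le.2 hgt))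
  have hgt' : ∀ s ∈ Set.Ioc t2 t, 1 < C s i := by
    intro s hs
    by_contra hle; push_neg at hle
    exact absurd (le_csSup hbdd ⟨⟨le_trans ht2.1.1 (le_of_lt hs.1), hs.2⟩, hle⟩)
      (not_le.2 hs.1)
  have hct2 : ContinuousAt (fun u => C u i) t2 := (hfd t2 ht2T).continuousAt
  haveI hne : (nhdsWithin t2 (Set.Ioi t2)).NeBot := inferInstance
  have h1le : (1:ℝ) ≤ C t2 i := by
    refine ge_of_tendsto (hct2.tendsto.mono_left (nhdsWithin_le_nhds (s := Set.Ioi t2))) ?_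
    filter_upwards [Ioo_mem_nhdsGT_of_mem (Set.mem_Ico.2 ⟨le_rfl, ht2t⟩)] with s hs
    exact le_of_lt (hgt' s ⟨hs.1, le_of_lt hs.2⟩)
  have heq : C t2 i = 1 := le_antisymm ht2.2 h1le
  have hneg : scsF a w x α β δ γ (C t2) i < 0 := by
    have hd : scsF a w x α β δ γ (C t2) i = -(γ * w i) := by simp [scsF, heq]
    rw [hd]; exact neg_neg_iff_pos.2 (mul_pos hγ (hw i))
  have hev := scs_eventually_lt_right (hfd t2 ht2T) hneg
  obtain ⟨s, hs1, hs2⟩ :=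
    (hev.and (Ioo_mem_nhdsGT_of_mem (Set.mem_Ico.2 ⟨le_rfl, ht2t⟩))).exists
  have := hgt' s ⟨hs2.1, le_of_lt hs2.2⟩
  rw [heq] at hs1
  linarith

set_option maxHeartbeats 1000000 in
theorem scs_monotone_in_strategy_scaling {N : ℕ} (a : Fin N → Fin N → ℝ)
    (ha : ∀ i j, a i j = 0 ∨ a i j = 1)
    (w x : Fin N → ℝ) (α β δ γ T lam : ℝ)
    (hα : 0 < α) (hβ : 0 < β) (hδ : 0 < δ) (hγ : 0 < γ) (hlam : 1 ≤ lam)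
    (hx : ∀ i, 0 ≤ x i) (hw : ∀ i, 0 < w i) (hT : 0 < T)
    (C1 C2 : ℝ → Fin N → ℝ)
    (hC1 : ∀ t ∈ Set.Icc (0 : ℝ) T, HasDerivAt C1 (scsF a w x α β δ γ (C1 t)) t)
    (hC2 : ∀ t ∈ Set.Icc (0 : ℝ) T,
      HasDerivAt C2 (scsF a w (fun i => lam * x i) α β δ γ (C2 t)) t)
    (h0 : C1 0 = C2 0) (h0box : ∀ i, C1 0 i ∈ Set.Icc (0 : ℝ) 1) :
    ∀ t ∈ Set.Icc (0 : ℝ) T, ∀ i, C1 t i ≤ C2 t i := by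
  by_cases hN : N = 0
  · subst hN; intro t ht i; exact i.elim0
  -- componentwise derivatives and continuity
  have hd1 : ∀ j, ∀ s ∈ Set.Icc (0:ℝ) T,
      HasDerivAt (fun u => C1 u j) (scsF a w x α β δ γ (C1 s) j) s :=
    fun j s hs => (hasDerivAt_pi.1 (hC1 s hs)) j
  have hd2 : ∀ j, ∀ s ∈ Set.Icc (0:ℝ) T,
      HasDerivAt (fun u => C2 u j) (scsF a w (fun i => lam * x i) α β δ γ (C2 s) j) s :=
    fun j s hs => (hasDerivAt_pi.1 (hC2 s hs)) j
  have hc1 : ContinuousOn C1 (Set.Icc 0 T) :=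
    fun s hs => ((hC1 s hs).continuousAt).continuousWithinAt
  have hc2 : ContinuousOn C2 (Set.Icc 0 T) :=
    fun s hs => ((hC2 s hs).continuousAt).continuousWithinAt
  -- a global bound M on all components
  obtain ⟨M1, hM1⟩ := (isCompact_Icc (a := (0:ℝ)) (b := T)).exists_bound_of_continuousOn hc1
  obtain ⟨M2, hM2⟩ := (isCompact_Icc (a := (0:ℝ)) (b := T)).exists_bound_of_continuousOn hc2
  set M : ℝ := max 1 (max M1 M2) with hMdef
  have hMpos : (0:ℝ) < M := lt_of_lt_of_le one_pos (le_max_left _ _)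
  have hMb1 : ∀ s ∈ Set.Icc (0:ℝ) T, ∀ j, |C1 s j| ≤ M := by
    intro s hs j
    calc |C1 s j| = ‖C1 s j‖ := (Real.norm_eq_abs _).symm
    _ ≤ ‖C1 s‖ := norm_le_pi_norm (C1 s) j
    _ ≤ M1 := hM1 s hs
    _ ≤ M := le_trans (le_max_left _ _) (le_max_right _ _)
  have hMb2 : ∀ s ∈ Set.Icc (0:ℝ) T, ∀ j, |C2 s j| ≤ M := by
    intro s hs j
    calc |C2 s j| = ‖C2 s j‖ := (Real.norm_eq_abs _).symm
    _ ≤ ‖C2 s‖ := norm_le_pi_norm (C2 s) j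
    _ ≤ M2 := hM2 s hs
    _ ≤ M := le_trans (le_max_right _ _) (le_max_right _ _)
  clear_value M
  -- C2 stays below 1
  have hone2 : ∀ s ∈ Set.Icc (0:ℝ) T, ∀ j, C2 s j ≤ 1 :=
    scs_le_one a w (fun i => lam * x i) α β δ γ T hγ hw C2 hC2
      (fun j => by rw [← h0]; exact (h0box j).2)
  -- the Gronwall constant K
  have hNe : (Finset.univ : Finset (Fin N)).Nonempty :=
    ⟨⟨0, Nat.pos_of_ne_zero hN⟩, Finset.mem_univ _⟩
  set R : ℝ := Finset.univ.sup' hNe (fun j => 1 / (δ * w j)) with hRdef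
  have hRub : ∀ j, 1 / (δ * w j) ≤ R :=
    fun j => Finset.le_sup' (fun j => 1 / (δ * w j)) (Finset.mem_univ j)
  clear_value R
  set K : ℝ := 1 + β * N * (2 * M + 1) * R with hKdef
  clear_value K
  -- derivative of the exponential barrier
  have hexp : ∀ ε : ℝ, ∀ s : ℝ,
      HasDerivAt (fun u => ε * Real.exp (K * u)) (ε * (K * Real.exp (K * s))) s := by
    intro ε s
    have h1 : HasDerivAt (fun u : ℝ => K * u) K s := by
      simpa using (hasDerivAt_id s).const_mul K
    have h2 := (Real.hasDerivAt_exp (K * s)).comp s h1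
    have h3 := h2.const_mul ε
    exact h3.congr_deriv (by ring)
  -- the key comparison with the ε-barrier
  have key : ∀ ε : ℝ, 0 < ε → ∀ s ∈ Set.Icc (0:ℝ) T, ∀ j,
      C1 s j - C2 s j < ε * Real.exp (K * s) := by
    intro ε hε
    by_contra hcon
    push_neg at hcon
    obtain ⟨sbad, hsbad, jbad, hjbad⟩ := hcon
    -- the barrier functions and the first-touch set
    set g : Fin N → ℝ → ℝ := fun j s => C1 s j - C2 s j - ε * Real.exp (K * s) with hgdef
    have hgd : ∀ j, ∀ s ∈ Set.Icc (0:ℝ) T, HasDerivAt (g j)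
        (scsF a w x α β δ γ (C1 s) j - scsF a w (fun i => lam * x i) α β δ γ (C2 s) j
          - ε * (K * Real.exp (K * s))) s :=
      fun j s hs => ((hd1 j s hs).sub (hd2 j s hs)).sub (hexp ε s)
    have hgc : ∀ j, ContinuousOn (g j) (Set.Icc 0 T) :=
      fun j s hs => ((hgd j s hs).continuousAt).continuousWithinAt
    set S : Set ℝ := ⋃ j, (Set.Icc (0:ℝ) T ∩ (g j) ⁻¹' Set.Ici 0) with hSdef
    have hSclosed : IsClosed S :=
      isClosed_iUnion_of_finite (fun j =>
        ContinuousOn.preimage_isClosed_of_isClosed (hgc j) isClosed_Icc isClosed_Ici)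
    have hSne : S.Nonempty := ⟨sbad, Set.mem_iUnion.2 ⟨jbad, hsbad, by
      simp only [Set.mem_preimage, Set.mem_Ici, hgdef]; linarith⟩⟩
    have hSbdd : BddBelow S := by
      refine BddBelow.mono (t := Set.Icc (0:ℝ) T) ?_ bddBelow_Icc
      intro s hs
      obtain ⟨j, hj⟩ := Set.mem_iUnion.1 hs
      exact hj.1
    set t0 : ℝ := sInf S with ht0def
    have ht0S : t0 ∈ S := hSclosed.csInf_mem hSne hSbdd
    obtain ⟨i0, ht0Icc, hgi0⟩ : ∃ j, t0 ∈ Set.Icc (0:ℝ) T ∧ 0 ≤ g j t0 := by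
      obtain ⟨j, hj⟩ := Set.mem_iUnion.1 ht0S
      exact ⟨j, hj.1, hj.2⟩
    have ht0pos : 0 < t0 := by
      rcases lt_or_eq_of_le ht0Icc.1 with h | h
      · exact h
      · exfalso
        obtain ⟨j, hj⟩ := Set.mem_iUnion.1 ht0S
        have h2 : (0:ℝ) ≤ g j t0 := hj.2
        rw [← h] at h2
        have h00 : g j 0 = -ε := by
          simp only [hgdef]
          rw [congrFun h0 j]
          simp
        rw [h00] at h2
        linarith
    have hbefore : ∀ s, 0 ≤ s → s < t0 → ∀ j, g j s < 0 := by
      intro s hs0 hst0 j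
      by_contra hge; push_neg at hge
      have hsS : s ∈ S := Set.mem_iUnion.2 ⟨j, ⟨hs0, le_trans (le_of_lt hst0) ht0Icc.2⟩,
        Set.mem_Ici.2 hge⟩
      exact absurd (csInf_le hSbdd hsS) (not_le.2 hst0)
    haveI : (nhdsWithin t0 (Set.Iio t0)).NeBot := inferInstance
    have hle_all : ∀ j, g j t0 ≤ 0 := by
      intro j
      have hct : ContinuousAt (g j) t0 := (hgd j t0 ht0Icc).continuousAt
      refine le_of_tendsto (hct.tendsto.mono_left (nhdsWithin_le_nhds (s := Set.Iio t0))) ?_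
      filter_upwards [Ioo_mem_nhdsLT_of_mem (Set.mem_Ioc.2 ⟨ht0pos, le_rfl⟩)] with s hs
      exact le_of_lt (hbefore s (le_of_lt hs.1) hs.2 j)
    have heq0 : g i0 t0 = 0 := le_antisymm (hle_all i0) hgi0
    -- derivative of g i0 at t0 is nonnegative (first touch from below)
    have hd_nonneg : 0 ≤ scsF a w x α β δ γ (C1 t0) i0
        - scsF a w (fun i => lam * x i) α β δ γ (C2 t0) i0
        - ε * (K * Real.exp (K * t0)) := by
      refine scs_deriv_nonneg_of_left (hgd i0 t0 ht0Icc) ?_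
      filter_upwards [Ioo_mem_nhdsLT_of_mem (Set.mem_Ioc.2 ⟨ht0pos, le_rfl⟩)] with s hs
      rw [heq0]
      exact hbefore s (le_of_lt hs.1) hs.2 i0
    -- now derive a contradiction by showing the derivative is negative
    set η : ℝ := ε * Real.exp (K * t0) with hηdef
    have hη : 0 < η := mul_pos hε (Real.exp_pos _)
    have hcc : C1 t0 i0 - C2 t0 i0 = η := by
      have h := heq0; simp only [hgdef] at h; rw [hηdef]; linarith
    have hlej : ∀ j, C1 t0 j - C2 t0 j ≤ η := by
      intro j; have h := hle_all j; simp only [hgdef] at h; rw [hηdef]; linarith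
    have hKη : ε * (K * Real.exp (K * t0)) = (1 + β * N * (2 * M + 1) * R) * η := by
      rw [hηdef, hKdef]; ring
    clear_value η
    clear_value t0
    clear_value S
    clear_value g
    -- sum bounds
    have hs1lb : (N:ℝ) * (-M) ≤ ∑ j, a j i0 * C1 t0 j := by
      have h := Finset.sum_le_sum (s := (Finset.univ : Finset (Fin N))) (f := fun _ : Fin N => -M)
        (g := fun j => a j i0 * C1 t0 j) (fun j _ => by
          show -M ≤ a j i0 * C1 t0 j
          rcases ha j i0 with h | h
          · rw [h, zero_mul]; linarith
          · rw [h, one_mul]; linarith [(abs_le.1 (hMb1 t0 ht0Icc j)).1])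
      simpa [Finset.sum_const, Finset.card_univ, nsmul_eq_mul] using h
    have hdiff : (∑ j, a j i0 * C1 t0 j) - (∑ j, a j i0 * C2 t0 j) ≤ (N:ℝ) * η := by
      rw [← Finset.sum_sub_distrib]
      have h := Finset.sum_le_sum (s := (Finset.univ : Finset (Fin N))) (f := fun j => a j i0 * C1 t0 j - a j i0 * C2 t0 j)
        (g := fun _ : Fin N => η) (fun j _ => by
          show a j i0 * C1 t0 j - a j i0 * C2 t0 j ≤ η
          rcases ha j i0 with h | h
          · rw [h, zero_mul, zero_mul]; linarith
          · rw [h, one_mul, one_mul]; exact hlej j)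
      simpa [Finset.sum_const, Finset.card_univ, nsmul_eq_mul] using h
    have hc2le1 : C2 t0 i0 ≤ 1 := hone2 t0 ht0Icc i0
    have hc2M : -M ≤ C2 t0 i0 := (abs_le.1 (hMb2 t0 ht0Icc i0)).1
    have hu : 0 < 1 / (δ * w i0) := one_div_pos.2 (mul_pos hδ (hw i0))
    have huR : 1 / (δ * w i0) ≤ R := hRub i0
    have hRpos : 0 < R := lt_of_lt_of_le hu huR
    -- abbreviations
    set s1 : ℝ := ∑ j, a j i0 * C1 t0 j with hs1def
    set s2 : ℝ := ∑ j, a j i0 * C2 t0 j with hs2def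
    set c2 : ℝ := C2 t0 i0 with hc2def
    clear_value s1 s2 c2
    have hc1eq : C1 t0 i0 = c2 + η := by linarith [hcc]
    -- the quasimonotonicity estimate
    have hAsub : (α * x i0 + β * s1) * (1 - (c2 + η))
        - (α * (lam * x i0) + β * s2) * (1 - c2) ≤ β * ((N:ℝ) * (2 * M + 1) * η) := by
      have h1c2 : (0:ℝ) ≤ 1 - c2 := by linarith
      have e1 : 0 ≤ (lam - 1) * (α * x i0) * (1 - c2) :=
        mul_nonneg (mul_nonneg (by linarith) (mul_nonneg hα.le (hx i0))) h1c2
      have e2 : β * ((s1 - s2) * (1 - c2)) ≤ β * (((N:ℝ) * η) * (1 - c2)) :=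
        mul_le_mul_of_nonneg_left (mul_le_mul_of_nonneg_right hdiff h1c2) hβ.le
      have e3 : β * (((N:ℝ) * η) * (1 - c2)) ≤ β * (((N:ℝ) * η) * (1 + M)) := by
        have hNη : (0:ℝ) ≤ (N:ℝ) * η := mul_nonneg (Nat.cast_nonneg N) hη.le
        exact mul_le_mul_of_nonneg_left
          (mul_le_mul_of_nonneg_left (by linarith) hNη) hβ.le
      have e4 : -((α * x i0 + β * s1) * η) ≤ β * ((N:ℝ) * M) * η := by
        have h5 : β * ((N:ℝ) * (-M)) ≤ β * s1 := mul_le_mul_of_nonneg_left hs1lb hβ.le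
        have h6 : 0 ≤ α * x i0 * η := mul_nonneg (mul_nonneg hα.le (hx i0)) hη.le
        linarith [mul_le_mul_of_nonneg_right h5 hη.le]
      nlinarith [e1, e2, e3, e4]
    -- conclude the derivative is negative
    have hfinal : scsF a w x α β δ γ (C1 t0) i0
        - scsF a w (fun i => lam * x i) α β δ γ (C2 t0) i0
        - ε * (K * Real.exp (K * t0)) < 0 := by
      simp only [scsF]
      rw [← hs1def, ← hs2def, hc1eq, ← hc2def, hKη]
      have h5 : (1 / (δ * w i0)) * ((α * x i0 + β * s1) * (1 - (c2 + η))
          - (α * (lam * x i0) + β * s2) * (1 - c2))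
          ≤ (1 / (δ * w i0)) * (β * ((N:ℝ) * (2 * M + 1) * η)) :=
        mul_le_mul_of_nonneg_left hAsub hu.le
      have h6 : (1 / (δ * w i0)) * (β * ((N:ℝ) * (2 * M + 1) * η))
          ≤ R * (β * ((N:ℝ) * (2 * M + 1) * η)) := by
        refine mul_le_mul_of_nonneg_right huR ?_
        exact mul_nonneg hβ.le (mul_nonneg (mul_nonneg (Nat.cast_nonneg N)
          (by linarith : (0:ℝ) ≤ 2 * M + 1)) hη.le)
      have h7 : 0 < γ * w i0 * η := mul_pos (mul_pos hγ (hw i0)) hη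
      nlinarith [h5, h6, h7, hη]
    linarith
  -- let ε → 0
  intro t ht i
  by_contra hlt
  push_neg at hlt
  have hpos : 0 < C1 t i - C2 t i := sub_pos.2 hlt
  have hexppos : 0 < Real.exp (K * t) := Real.exp_pos _
  set ε : ℝ := (C1 t i - C2 t i) / (2 * Real.exp (K * t)) with hεdef
  have hε : 0 < ε := by positivity
  have h := key ε hε t ht i
  have : ε * Real.exp (K * t) = (C1 t i - C2 t i) / 2 := by
    rw [hεdef]; field_simp
  rw [this] at h
  linarith
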